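/- arXiv:1412.1659 — 2 statements merged into one kernel-verified Lean document; each statement's English description precedes it below -/
import Mathlib

section
/- For a symmetric composition algebra (S,*,q), the triality Lie algebra tri(S) = {(d₀,d₁,d₂) ∈ o(S,q)³ : d₀(x*y) = d₁(x)*y + x*d₂(y) for all x,y} is a Lie subalgebra of o(S,q)³, and the cyclic shift ϑ(d₀,d₁,d₂) = (d₂,d₀,d₁) is a Lie algebra automorphism of tri(S) of order three. -/
/-- The orthogonal Lie algebra `o(S,q)` of endomorphisms skew with respect to
the polar form of `q`. -/
def skewSet {S : Type*} [NonUnitalNonAssocRing S] [Module ℝ S]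
    (q : QuadraticForm ℝ S) : Set (Module.End ℝ S) :=
  {d | ∀ x y : S, QuadraticMap.polar q (d x) y + QuadraticMap.polar q x (d y) = 0}

/-- The triality Lie algebra
`tri(S) = {(d₀,d₁,d₂) ∈ o(S,q)³ : d₀(x*y) = d₁(x)*y + x*d₂(y)}`. -/
def triSet {S : Type*} [NonUnitalNonAssocRing S] [Module ℝ S]
    (q : QuadraticForm ℝ S) :
    Set (Module.End ℝ S × Module.End ℝ S × Module.End ℝ S) :=
  {t | t.1 ∈ skewSet q ∧ t.2.1 ∈ skewSet q ∧ t.2.2 ∈ skewSet q ∧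
    ∀ x y : S, t.1 (x * y) = (t.2.1 x) * y + x * (t.2.2 y)}

/-- The cyclic shift `ϑ(d₀,d₁,d₂) = (d₂,d₀,d₁)`. -/
def triShift {S : Type*} [NonUnitalNonAssocRing S] [Module ℝ S] :
    (Module.End ℝ S × Module.End ℝ S × Module.End ℝ S) →
    (Module.End ℝ S × Module.End ℝ S × Module.End ℝ S) :=
  fun t => (t.2.2, t.1, t.2.1)

section Aux
variable {S : Type*} [NonUnitalNonAssocRing S] [Module ℝ S]
  (q : QuadraticForm ℝ S)

lemma skew_zero : (0 : Module.End ℝ S) ∈ skewSet q := by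
  intro x y; simp [skewSet, QuadraticMap.polar]

lemma skew_add {d e : Module.End ℝ S} (hd : d ∈ skewSet q) (he : e ∈ skewSet q) :
    d + e ∈ skewSet q := by
  intro x y
  have h1 := hd x y
  have h2 := he x y
  simp only [LinearMap.add_apply, QuadraticMap.polar_add_left, QuadraticMap.polar_add_right]
  linarith

lemma skew_smul {d : Module.End ℝ S} (r : ℝ) (hd : d ∈ skewSet q) :
    r • d ∈ skewSet q := by
  intro x y
  simp only [LinearMap.smul_apply, QuadraticMap.polar_smul_left, QuadraticMap.polar_smul_right,
    smul_eq_mul]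
  rw [← mul_add, hd x y, mul_zero]

lemma skew_apply {d : Module.End ℝ S} (hd : d ∈ skewSet q) (x y : S) :
    QuadraticMap.polar q (d x) y = - QuadraticMap.polar q x (d y) := by
  have := hd x y; linarith

lemma skew_comm {d e : Module.End ℝ S} (hd : d ∈ skewSet q) (he : e ∈ skewSet q) :
    d * e - e * d ∈ skewSet q := by
  intro x y
  simp only [LinearMap.sub_apply, Module.End.mul_apply, QuadraticMap.polar_sub_left,
    QuadraticMap.polar_sub_right]
  rw [skew_apply q hd (e x) y, skew_apply q he x (d y), skew_apply q he (d x) y,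
    skew_apply q hd x (e y)]
  ring

end Aux

/-- For a real symmetric composition algebra `(S,*,q)`, the
triality Lie algebra is a Lie subalgebra of `o(S,q)³` (with componentwise
commutator bracket), and the cyclic shift `ϑ` is a Lie algebra automorphism of
`tri(S)` of order three. -/
theorem stmt10 {S : Type*} [NonUnitalNonAssocRing S] [Module ℝ S]
    [SMulCommClass ℝ S S] [IsScalarTower ℝ S S]
    (q : QuadraticForm ℝ S)
    (hmul : ∀ x y : S, q (x * y) = q x * q y)
    (hsym : ∀ x y z : S, QuadraticMap.polar q (x * y) z = QuadraticMap.polar q x (y * z))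
    (hnondeg : ∀ x : S, (∀ y : S, QuadraticMap.polar q x y = 0) → x = 0) :
    -- tri(S) is a subspace closed under the componentwise bracket
    ((0 : Module.End ℝ S × Module.End ℝ S × Module.End ℝ S) ∈ triSet q) ∧
    (∀ t u, t ∈ triSet q → u ∈ triSet q → t + u ∈ triSet q) ∧
    (∀ (r : ℝ) t, t ∈ triSet q → r • t ∈ triSet q) ∧
    (∀ t u, t ∈ triSet q → u ∈ triSet q →
      (t.1 * u.1 - u.1 * t.1, t.2.1 * u.2.1 - u.2.1 * t.2.1,
        t.2.2 * u.2.2 - u.2.2 * t.2.2) ∈ triSet q) ∧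
    -- ϑ is an automorphism of tri(S) of order three
    (∀ t, t ∈ triSet q → triShift t ∈ triSet q) ∧
    (∀ t u : Module.End ℝ S × Module.End ℝ S × Module.End ℝ S,
      triShift (t + u) = triShift t + triShift u) ∧
    (∀ (r : ℝ) t, triShift (r • t) = r • triShift (t : Module.End ℝ S × Module.End ℝ S × Module.End ℝ S)) ∧
    (∀ t u : Module.End ℝ S × Module.End ℝ S × Module.End ℝ S,
      triShift (t.1 * u.1 - u.1 * t.1, t.2.1 * u.2.1 - u.2.1 * t.2.1,
        t.2.2 * u.2.2 - u.2.2 * t.2.2) =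
      ((triShift t).1 * (triShift u).1 - (triShift u).1 * (triShift t).1,
        (triShift t).2.1 * (triShift u).2.1 - (triShift u).2.1 * (triShift t).2.1,
        (triShift t).2.2 * (triShift u).2.2 - (triShift u).2.2 * (triShift t).2.2)) ∧
    (triShift ∘ triShift ∘ triShift = (id : (Module.End ℝ S × Module.End ℝ S × Module.End ℝ S) → _)) ∧
    (triShift ≠ (id : (Module.End ℝ S × Module.End ℝ S × Module.End ℝ S) → _) ∨
      Subsingleton (Module.End ℝ S)) := by
  have polar_symm : ∀ x y : S, QuadraticMap.polar q x y = QuadraticMap.polar q y x := by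
    intro x y; simp only [QuadraticMap.polar, add_comm]; ring
  refine ⟨?_, ?_, ?_, ?_, ?_, ?_, ?_, ?_, ?_, ?_⟩
  · exact ⟨skew_zero q, skew_zero q, skew_zero q, by intro x y; simp⟩
  · rintro t u ⟨t0, t1, t2, ht⟩ ⟨u0, u1, u2, hu⟩
    refine ⟨skew_add q t0 u0, skew_add q t1 u1, skew_add q t2 u2, ?_⟩
    intro x y
    simp only [Prod.fst_add, Prod.snd_add, LinearMap.add_apply, ht, hu, add_mul, mul_add]
    abel
  · rintro r t ⟨t0, t1, t2, ht⟩
    refine ⟨skew_smul q r t0, skew_smul q r t1, skew_smul q r t2, ?_⟩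
    intro x y
    simp only [Prod.smul_fst, Prod.smul_snd, LinearMap.smul_apply, ht, smul_add, smul_mul_assoc,
      mul_smul_comm]
  · rintro t u ⟨t0, t1, t2, ht⟩ ⟨u0, u1, u2, hu⟩
    refine ⟨skew_comm q t0 u0, skew_comm q t1 u1, skew_comm q t2 u2, ?_⟩
    intro x y
    simp only [LinearMap.sub_apply, Module.End.mul_apply, ht, hu, map_add, mul_add, add_mul,
      sub_mul, mul_sub]
    abel
  · rintro t ⟨t0, t1, t2, ht⟩
    refine ⟨t2, t0, t1, ?_⟩
    intro x y
    have key : ∀ z : S, QuadraticMap.polar q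
        (t.2.2 (x * y) - ((t.1 x) * y + x * (t.2.1 y))) z = 0 := by
      intro z
      have hv : y * (t.2.2 z) = t.1 (y * z) - (t.2.1 y) * z := by
        rw [ht y z]; abel
      have e1 : QuadraticMap.polar q (t.2.2 (x * y)) z
          = - QuadraticMap.polar q (x * y) (t.2.2 z) := skew_apply q t2 _ _
      have e2 : QuadraticMap.polar q (x * y) (t.2.2 z)
          = QuadraticMap.polar q x (y * t.2.2 z) := hsym _ _ _
      have e3 : QuadraticMap.polar q x (y * t.2.2 z)
          = QuadraticMap.polar q x (t.1 (y * z)) - QuadraticMap.polar q x (t.2.1 y * z) := by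
        rw [hv, QuadraticMap.polar_sub_right]
      have e4 : QuadraticMap.polar q x (t.1 (y * z))
          = - QuadraticMap.polar q (t.1 x) (y * z) := by
        have h := t0 x (y * z); linarith
      have e5 : QuadraticMap.polar q (t.1 x) (y * z)
          = QuadraticMap.polar q (t.1 x * y) z := (hsym _ _ _).symm
      have e6 : QuadraticMap.polar q x (t.2.1 y * z)
          = QuadraticMap.polar q (x * t.2.1 y) z := (hsym _ _ _).symm
      rw [QuadraticMap.polar_sub_left, QuadraticMap.polar_add_left]
      rw [e1, e2, e3, e4, e5, e6]
      ring
    exact sub_eq_zero.mp (hnondeg _ key)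
  · intro t u; rfl
  · intro r t; rfl
  · intro t u; rfl
  · rfl
  · by_cases h : Subsingleton (Module.End ℝ S)
    · exact Or.inr h
    · refine Or.inl fun heq => h ⟨fun a b => ?_⟩
      exact (congrArg Prod.fst (congrFun heq (a, b, b))).symm
end

section
/- For a symmetric composition algebra (S,*,q) and x, y ∈ S, the triple t_{x,y} = (σ_{x,y}, (1/2)q(x,y)id − r_x l_y, (1/2)q(x,y)id − l_x r_y) belongs to the triality Lie algebra tri(S,*,q), where σ_{x,y}(z) = q(x,z)y − q(y,z)x, l_x(z) = x*z, r_x(z) = z*x. -/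
open QuadraticMap

/-- `σ_{x,y}(z) = q(x,z)y − q(y,z)x`. -/
noncomputable def sigmaMap {S : Type*} [NonUnitalNonAssocRing S] [Module ℝ S]
    (q : QuadraticForm ℝ S) (x y : S) : Module.End ℝ S :=
  (q.polarBilin x).smulRight y - (q.polarBilin y).smulRight x

/-- The triple `t_{x,y} = (σ_{x,y}, ½q(x,y)id − r_x l_y, ½q(x,y)id − l_x r_y)`. -/
noncomputable def tTriple {S : Type*} [NonUnitalNonAssocRing S] [Module ℝ S]
    [SMulCommClass ℝ S S] [IsScalarTower ℝ S S]
    (q : QuadraticForm ℝ S) (x y : S) :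
    Module.End ℝ S × Module.End ℝ S × Module.End ℝ S :=
  (sigmaMap q x y,
    ((2 : ℝ)⁻¹ * QuadraticMap.polar q x y) • (LinearMap.id : S →ₗ[ℝ] S) -
      (LinearMap.mulRight ℝ x) ∘ₗ (LinearMap.mulLeft ℝ y),
    ((2 : ℝ)⁻¹ * QuadraticMap.polar q x y) • (LinearMap.id : S →ₗ[ℝ] S) -
      (LinearMap.mulLeft ℝ x) ∘ₗ (LinearMap.mulRight ℝ y))

section Aux
variable {S : Type*} [NonUnitalNonAssocRing S] [Module ℝ S]
  [SMulCommClass ℝ S S] [IsScalarTower ℝ S S]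
  (q : QuadraticForm ℝ S)

set_option linter.unusedSectionVars false

lemma comp_polar_right (hmul : ∀ x y : S, q (x * y) = q x * q y) (a b c : S) :
    polar q (a * c) (b * c) = polar q a b * q c := by
  have h1 : (a + b) * c = a * c + b * c := add_mul a b c
  simp only [QuadraticMap.polar, ← h1, hmul]
  ring

lemma comp_polar_full (hmul : ∀ x y : S, q (x * y) = q x * q y) (a b c d : S) :
    polar q (a * c) (b * d) + polar q (a * d) (b * c) = polar q a b * polar q c d := by
  have h := comp_polar_right q hmul a b (c + d)
  rw [mul_add, mul_add, polar_add_left, polar_add_right, polar_add_right,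
    comp_polar_right q hmul a b c, comp_polar_right q hmul a b d] at h
  have hq : q (c + d) = polar q c d + q c + q d := by
    simp only [QuadraticMap.polar]; ring
  rw [hq] at h
  linear_combination h

lemma pf1 (hmul : ∀ x y : S, q (x * y) = q x * q y)
    (hsym : ∀ x y z : S, polar q (x * y) z = polar q x (y * z))
    (hnondeg : ∀ x : S, (∀ y : S, polar q x y = 0) → x = 0) (x y z : S) :
    x * (y * z) + z * (y * x) = polar q x z • y := by
  refine sub_eq_zero.mp (hnondeg _ fun w => ?_)
  rw [polar_sub_left, polar_add_left, polar_smul_left, smul_eq_mul,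
    polar_comm q (x * (y * z)) w, ← hsym w x (y * z),
    polar_comm q (z * (y * x)) w, ← hsym w z (y * x),
    polar_comm q y w]
  linear_combination comp_polar_full q hmul w y x z

lemma pf2 (hmul : ∀ x y : S, q (x * y) = q x * q y)
    (hsym : ∀ x y z : S, polar q (x * y) z = polar q x (y * z))
    (hnondeg : ∀ x : S, (∀ y : S, polar q x y = 0) → x = 0) (x y z : S) :
    (x * y) * z + (z * y) * x = polar q x z • y := by
  refine sub_eq_zero.mp (hnondeg _ fun w => ?_)
  rw [polar_sub_left, polar_add_left, polar_smul_left, smul_eq_mul,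
    hsym (x * y) z w, hsym (z * y) x w, polar_comm q (z * y) (x * w)]
  linear_combination comp_polar_full q hmul x z y w

lemma lemM (hmul : ∀ x y : S, q (x * y) = q x * q y)
    (hsym : ∀ x y z : S, polar q (x * y) z = polar q x (y * z))
    (hnondeg : ∀ x : S, (∀ y : S, polar q x y = 0) → x = 0) (x y u v : S) :
    (v * x) * (y * u) + (v * y) * (x * u)
      = polar q x (u * v) • y + polar q y (u * v) • x - polar q x y • (u * v) := by
  refine sub_eq_zero.mp (hnondeg _ fun w => ?_)
  rw [polar_sub_left, polar_add_left, polar_sub_left, polar_add_left,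
    polar_smul_left, polar_smul_left, polar_smul_left,
    smul_eq_mul, smul_eq_mul, smul_eq_mul]
  have e1 : polar q ((v * x) * (y * u)) w
      = polar q y w * polar q (v * x) u - polar q (v * x) ((w * u) * y) := by
    rw [hsym (v * x) (y * u) w,
      eq_sub_of_add_eq (pf2 q hmul hsym hnondeg y u w),
      polar_sub_right, polar_smul_right, smul_eq_mul]
  have e2 : polar q ((v * y) * (x * u)) w
      = polar q x w * polar q (v * y) u - polar q (v * y) ((w * u) * x) := by
    rw [hsym (v * y) (x * u) w,
      eq_sub_of_add_eq (pf2 q hmul hsym hnondeg x u w),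
      polar_sub_right, polar_smul_right, smul_eq_mul]
  have e3 := comp_polar_full q hmul v (w * u) x y
  have c1 : polar q (v * x) u = polar q x (u * v) := by
    rw [polar_comm q (v * x) u, ← hsym u v x, polar_comm q (u * v) x]
  have c2 : polar q (v * y) u = polar q y (u * v) := by
    rw [polar_comm q (v * y) u, ← hsym u v y, polar_comm q (u * v) y]
  have c3 : polar q v (w * u) = polar q (u * v) w := by
    rw [← hsym v w u, polar_comm q (v * w) u, ← hsym u v w]
  linear_combination e1 + e2 - e3 + polar q y w * c1 + polar q x w * c2
    - polar q x y * c3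

lemma lemK (hmul : ∀ x y : S, q (x * y) = q x * q y)
    (hsym : ∀ x y z : S, polar q (x * y) z = polar q x (y * z))
    (hnondeg : ∀ x : S, (∀ y : S, polar q x y = 0) → x = 0) (x y u v : S) :
    ((y * u) * x) * v + u * (x * (v * y))
      = polar q x y • (u * v) - polar q x (u * v) • y + polar q y (u * v) • x := by
  have h1 := eq_sub_of_add_eq (pf2 q hmul hsym hnondeg (y * u) x v)
  have h2 := eq_sub_of_add_eq (pf1 q hmul hsym hnondeg u x (v * y))
  have hM := lemM q hmul hsym hnondeg x y u v
  have c1 : polar q (y * u) v = polar q y (u * v) := hsym y u v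
  have c2 : polar q u (v * y) = polar q y (u * v) := by
    rw [← hsym u v y, polar_comm]
  rw [h1, h2, c1, c2,
    show polar q y (u * v) • x - (v * x) * (y * u)
        + (polar q y (u * v) • x - (v * y) * (x * u))
      = polar q y (u * v) • x + polar q y (u * v) • x
        - ((v * x) * (y * u) + (v * y) * (x * u)) from by abel,
    hM]
  module

end Aux

/-- For a real symmetric composition algebra `(S,*,q)` and
`x, y ∈ S`, the triple `t_{x,y}` belongs to the triality Lie algebra. -/
theorem stmt11 {S : Type*} [NonUnitalNonAssocRing S] [Module ℝ S]
    [SMulCommClass ℝ S S] [IsScalarTower ℝ S S]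
    (q : QuadraticForm ℝ S)
    (hmul : ∀ x y : S, q (x * y) = q x * q y)
    (hsym : ∀ x y z : S, QuadraticMap.polar q (x * y) z = QuadraticMap.polar q x (y * z))
    (hnondeg : ∀ x : S, (∀ y : S, QuadraticMap.polar q x y = 0) → x = 0) :
    ∀ x y : S, tTriple q x y ∈ triSet q := by
  intro x y
  simp only [triSet, skewSet, tTriple, sigmaMap, Set.mem_setOf_eq,
    LinearMap.sub_apply, LinearMap.smulRight_apply,
    QuadraticMap.polarBilin_apply_apply, LinearMap.smul_apply,
    LinearMap.id_coe, id_eq, LinearMap.coe_comp, Function.comp_apply,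
    LinearMap.mulLeft_apply, LinearMap.mulRight_apply]
  refine ⟨fun z w => ?_, fun z w => ?_, fun z w => ?_, fun u v => ?_⟩
  · rw [polar_sub_left, polar_smul_left, polar_smul_left,
      polar_sub_right, polar_smul_right, polar_smul_right,
      smul_eq_mul, smul_eq_mul, smul_eq_mul, smul_eq_mul]
    have hc1 : polar q z y = polar q y z := polar_comm q z y
    have hc2 : polar q z x = polar q x z := polar_comm q z x
    linear_combination polar q x w * hc1 - polar q y w * hc2
  · rw [polar_sub_left, polar_smul_left, polar_sub_right, polar_smul_right]
    have e1 : polar q ((y * z) * x) w = polar q (y * z) (x * w) := hsym (y * z) x w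
    have e2 : polar q z ((y * w) * x) = polar q (y * w) (x * z) := by
      rw [polar_comm q z ((y * w) * x), hsym (y * w) x z]
    have e3 := comp_polar_full q hmul y x z w
    have e4 : polar q y x = polar q x y := polar_comm q y x
    simp only [smul_eq_mul]
    linear_combination -e1 - e2 - e3 - polar q z w * e4
  · rw [polar_sub_left, polar_smul_left, polar_sub_right, polar_smul_right]
    have e1 : polar q (x * (z * y)) w = polar q x ((z * y) * w) := hsym x (z * y) w
    have e2 : polar q z (x * (w * y)) = polar q x ((w * y) * z) := by
      rw [polar_comm q z (x * (w * y)), hsym x (w * y) z]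
    have e4 : polar q x ((z * y) * w) + polar q x ((w * y) * z)
        = polar q z w * polar q x y := by
      rw [← polar_add_right, pf2 q hmul hsym hnondeg z y w, polar_smul_right,
        smul_eq_mul]
    simp only [smul_eq_mul]
    linear_combination -e1 - e2 - e4
  · rw [sub_mul, mul_sub, smul_mul_assoc, mul_smul_comm,
      show ((2 : ℝ)⁻¹ * polar q x y) • (u * v) - ((y * u) * x) * v
          + (((2 : ℝ)⁻¹ * polar q x y) • (u * v) - u * (x * (v * y)))
        = ((2 : ℝ)⁻¹ * polar q x y) • (u * v) + ((2 : ℝ)⁻¹ * polar q x y) • (u * v)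
          - (((y * u) * x) * v + u * (x * (v * y))) from by abel,
      lemK q hmul hsym hnondeg x y u v]
    module
end
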